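/- Fix q ≥ 1 and define T : [0,∞) → ℝ by T(t) = t^{2q} for t ≤ 1 and T(t) = q(2q−1) t² − 4q(q−1) t + (q−1)(2q−1) for t > 1. Then T is twice continuously differentiable on (0,∞) (in particular the values, first derivatives and second derivatives of the two branches match at t = 1), T′(t) > 0 for all t > 0, T is convex, and T″(t)·t − T′(t) equals 4q(q−1) t^{2q−1} for t ≤ 1 and equals 4q(q−1) for t > 1; in particular 0 ≤ T″(t)·t − T′(t) ≤ 2(q−1) T′(t) for all t > 0. -/

import Mathlib

open Set

/-- the explicit truncated power function (case `K = 1`): `T(t) = t^{2q}`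
for `t ≤ 1` and `T(t) = q(2q−1)t² − 4q(q−1)t + (q−1)(2q−1)` for `t > 1` is `C²` on
`(0,∞)`, strictly increasing there, convex, with the stated formula and bounds for
`T″(t)·t − T′(t)`. -/
theorem explicit_truncated_power (q : ℝ) (hq : 1 ≤ q) (T : ℝ → ℝ)
    (hT : T = fun t => if t ≤ 1 then t ^ (2 * q)
      else q * (2 * q - 1) * t ^ 2 - 4 * q * (q - 1) * t + (q - 1) * (2 * q - 1)) :
    ContDiffOn ℝ 2 T (Set.Ioi 0) ∧
    (∀ t > (0 : ℝ), 0 < deriv T t) ∧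
    ConvexOn ℝ (Set.Ioi 0) T ∧
    (∀ t > (0 : ℝ), deriv (deriv T) t * t - deriv T t
      = if t ≤ 1 then 4 * q * (q - 1) * t ^ (2 * q - 1) else 4 * q * (q - 1)) ∧
    (∀ t > (0 : ℝ), 0 ≤ deriv (deriv T) t * t - deriv T t ∧
      deriv (deriv T) t * t - deriv T t ≤ 2 * (q - 1) * deriv T t) := by
  have hq0 : (0:ℝ) < q := lt_of_lt_of_le one_pos hq
  set T1 : ℝ → ℝ := fun t => if t ≤ 1 then 2 * q * t ^ (2 * q - 1)
    else 2 * q * (2 * q - 1) * t - 4 * q * (q - 1) with hT1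
  set T2 : ℝ → ℝ := fun t => if t ≤ 1 then 2 * q * (2 * q - 1) * t ^ (2 * q - 2)
    else 2 * q * (2 * q - 1) with hT2
  -- the polynomial branch and its derivatives
  have hpoly : ∀ x : ℝ, HasDerivAt
      (fun t : ℝ => q * (2 * q - 1) * t ^ 2 - 4 * q * (q - 1) * t + (q - 1) * (2 * q - 1))
      (2 * q * (2 * q - 1) * x - 4 * q * (q - 1)) x := by
    intro x
    have h1 : HasDerivAt (fun t : ℝ => t ^ 2) (2 * x) x := by
      simpa using (hasDerivAt_pow 2 x)
    have := (((h1.const_mul (q * (2 * q - 1))).sub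
        ((hasDerivAt_id x).const_mul (4 * q * (q - 1)))).add_const ((q - 1) * (2 * q - 1)))
    exact this.congr_deriv (by ring)
  have hlin : ∀ x : ℝ, HasDerivAt (fun t : ℝ => 2 * q * (2 * q - 1) * t - 4 * q * (q - 1))
      (2 * q * (2 * q - 1)) x := by
    intro x
    simpa using ((hasDerivAt_id x).const_mul (2 * q * (2 * q - 1))).sub_const (4 * q * (q - 1))
  -- first derivative
  have hD1 : ∀ t ∈ Ioi (0:ℝ), HasDerivAt T (T1 t) t := by
    intro t ht
    simp only [mem_Ioi] at ht
    rcases lt_trichotomy t 1 with h | h | h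
    · have hrp : HasDerivAt (fun x : ℝ => x ^ (2 * q)) (2 * q * t ^ (2 * q - 1)) t := by
        simpa using Real.hasDerivAt_rpow_const (p := 2 * q) (Or.inl (ne_of_gt ht))
      have heq : T =ᶠ[nhds t] fun x : ℝ => x ^ (2 * q) := by
        filter_upwards [Iio_mem_nhds h] with x hx
        simp [hT, le_of_lt (mem_Iio.mp hx)]
      have : T1 t = 2 * q * t ^ (2 * q - 1) := by simp [hT1, le_of_lt h]
      rw [this]
      exact hrp.congr_of_eventuallyEq heq
    · subst h
      have hval : (2 * q : ℝ) = 2 * q * (2 * q - 1) * 1 - 4 * q * (q - 1) := by ring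
      have hL : HasDerivWithinAt T (2 * q) (Iic 1) 1 := by
        have hrp : HasDerivAt (fun x : ℝ => x ^ (2 * q)) (2 * q * (1:ℝ) ^ (2 * q - 1)) 1 := by
          simpa using Real.hasDerivAt_rpow_const (p := 2 * q) (x := (1:ℝ)) (Or.inl one_ne_zero)
        rw [Real.one_rpow, mul_one] at hrp
        refine hrp.hasDerivWithinAt.congr ?_ ?_
        · intro x hx; simp [hT, (mem_Iic.mp hx)]
        · simp [hT]
      have hR : HasDerivWithinAt T (2 * q) (Ici 1) 1 := by
        have := (hpoly 1).hasDerivWithinAt (s := Ici (1:ℝ))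
        rw [← hval] at this
        refine this.congr ?_ ?_
        · intro x hx
          rcases eq_or_lt_of_le (mem_Ici.mp hx) with h1 | h1
          · simp [hT, ← h1]; ring
          · simp [hT, not_le.mpr h1]
        · simp [hT]; ring
      have := hL.union hR
      rw [Iic_union_Ici, hasDerivWithinAt_univ] at this
      have h1 : T1 1 = 2 * q := by simp [hT1]
      rw [h1]; exact this
    · have heq : T =ᶠ[nhds t]
          fun x : ℝ => q * (2 * q - 1) * x ^ 2 - 4 * q * (q - 1) * x + (q - 1) * (2 * q - 1) := by
        filter_upwards [Ioi_mem_nhds h] with x hx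
        simp [hT, not_le.mpr (mem_Ioi.mp hx)]
      have : T1 t = 2 * q * (2 * q - 1) * t - 4 * q * (q - 1) := by simp [hT1, not_le.mpr h]
      rw [this]
      exact (hpoly t).congr_of_eventuallyEq heq
  -- second derivative
  have hD2 : ∀ t ∈ Ioi (0:ℝ), HasDerivAt T1 (T2 t) t := by
    intro t ht
    simp only [mem_Ioi] at ht
    rcases lt_trichotomy t 1 with h | h | h
    · have hrp : HasDerivAt (fun x : ℝ => 2 * q * x ^ (2 * q - 1))
          (2 * q * ((2 * q - 1) * t ^ (2 * q - 1 - 1))) t :=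
        (Real.hasDerivAt_rpow_const (p := 2 * q - 1) (Or.inl (ne_of_gt ht))).const_mul (2 * q)
      have heq : T1 =ᶠ[nhds t] fun x : ℝ => 2 * q * x ^ (2 * q - 1) := by
        filter_upwards [Iio_mem_nhds h] with x hx
        simp [hT1, le_of_lt (mem_Iio.mp hx)]
      have hv : T2 t = 2 * q * ((2 * q - 1) * t ^ (2 * q - 1 - 1)) := by
        simp [hT2, le_of_lt h]
        ring_nf
      rw [hv]
      exact hrp.congr_of_eventuallyEq heq
    · subst h
      have hL : HasDerivWithinAt T1 (2 * q * (2 * q - 1)) (Iic 1) 1 := by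
        have hrp : HasDerivAt (fun x : ℝ => 2 * q * x ^ (2 * q - 1))
            (2 * q * ((2 * q - 1) * (1:ℝ) ^ (2 * q - 1 - 1))) 1 :=
          (Real.hasDerivAt_rpow_const (p := 2 * q - 1) (x := (1:ℝ))
            (Or.inl one_ne_zero)).const_mul (2 * q)
        rw [Real.one_rpow, mul_one] at hrp
        refine hrp.hasDerivWithinAt.congr ?_ ?_
        · intro x hx; simp [hT1, (mem_Iic.mp hx)]
        · simp [hT1]
      have hR : HasDerivWithinAt T1 (2 * q * (2 * q - 1)) (Ici 1) 1 := by
        refine ((hlin 1).hasDerivWithinAt (s := Ici (1:ℝ))).congr ?_ ?_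
        · intro x hx
          rcases eq_or_lt_of_le (mem_Ici.mp hx) with h1 | h1
          · simp [hT1, ← h1]; ring
          · simp [hT1, not_le.mpr h1]
        · simp [hT1]; ring
      have := hL.union hR
      rw [Iic_union_Ici, hasDerivWithinAt_univ] at this
      have h1 : T2 1 = 2 * q * (2 * q - 1) := by simp [hT2]
      rw [h1]; exact this
    · have heq : T1 =ᶠ[nhds t]
          fun x : ℝ => 2 * q * (2 * q - 1) * x - 4 * q * (q - 1) := by
        filter_upwards [Ioi_mem_nhds h] with x hx
        simp [hT1, not_le.mpr (mem_Ioi.mp hx)]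
      have hv : T2 t = 2 * q * (2 * q - 1) := by simp [hT2, not_le.mpr h]
      rw [hv]
      exact (hlin t).congr_of_eventuallyEq heq
  -- deriv identities
  have hd1 : ∀ t ∈ Ioi (0:ℝ), deriv T t = T1 t := fun t ht => (hD1 t ht).deriv
  have hd2 : ∀ t ∈ Ioi (0:ℝ), deriv (deriv T) t = T2 t := by
    intro t ht
    have heq : deriv T =ᶠ[nhds t] T1 := by
      filter_upwards [isOpen_Ioi.mem_nhds ht] with x hx
      exact hd1 x hx
    rw [Filter.EventuallyEq.deriv_eq heq]
    exact (hD2 t ht).deriv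
  -- derivative of deriv T at points of Ioi 0
  have hDD : ∀ t ∈ Ioi (0:ℝ), HasDerivAt (deriv T) (T2 t) t := by
    intro t ht
    have heq : deriv T =ᶠ[nhds t] T1 := by
      filter_upwards [isOpen_Ioi.mem_nhds ht] with x hx
      exact hd1 x hx
    exact (hD2 t ht).congr_of_eventuallyEq heq
  -- positivity and nonnegativity of T1, T2
  have hT1pos : ∀ t ∈ Ioi (0:ℝ), 0 < T1 t := by
    intro t ht
    simp only [mem_Ioi] at ht
    by_cases h : t ≤ 1
    · have : (0:ℝ) < t ^ (2 * q - 1) := Real.rpow_pos_of_pos ht _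
      simp only [hT1, if_pos h]
      positivity
    · simp only [hT1, if_neg h]
      push_neg at h
      nlinarith [mul_nonneg (mul_nonneg (show (0:ℝ) ≤ 2*q by linarith)
        (show (0:ℝ) ≤ 2*q-1 by linarith)) (show (0:ℝ) ≤ t-1 by linarith)]
  have hA : (0:ℝ) ≤ 2 * q * (2 * q - 1) := by nlinarith [mul_self_nonneg (q - 1)]
  have hT2nonneg : ∀ t ∈ Ioi (0:ℝ), 0 ≤ T2 t := by
    intro t ht
    simp only [mem_Ioi] at ht
    by_cases h : t ≤ 1
    · have hp : (0:ℝ) < t ^ (2 * q - 2) := Real.rpow_pos_of_pos ht _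
      simp only [hT2, if_pos h]
      exact mul_nonneg hA hp.le
    · simp only [hT2, if_neg h]
      exact hA
  -- continuity of T2 on Ioi 0
  have hT2cont : ContinuousOn T2 (Ioi 0) := by
    intro t ht
    simp only [mem_Ioi] at ht
    apply ContinuousAt.continuousWithinAt
    rcases lt_trichotomy t 1 with h | h | h
    · have hc : ContinuousAt (fun x : ℝ => 2 * q * (2 * q - 1) * x ^ (2 * q - 2)) t :=
        continuousAt_const.mul
          (Real.continuousAt_rpow_const t _ (Or.inl (ne_of_gt ht)))
      apply hc.congr
      filter_upwards [Iio_mem_nhds h] with x hx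
      simp [hT2, le_of_lt (mem_Iio.mp hx)]
    · subst h
      have hL : ContinuousWithinAt T2 (Iic 1) 1 := by
        have hc : ContinuousAt (fun x : ℝ => 2 * q * (2 * q - 1) * x ^ (2 * q - 2)) 1 :=
          continuousAt_const.mul
            (Real.continuousAt_rpow_const 1 _ (Or.inl one_ne_zero))
        refine hc.continuousWithinAt.congr ?_ ?_
        · intro x hx; simp [hT2, mem_Iic.mp hx]
        · simp [hT2]
      have hR : ContinuousWithinAt T2 (Ici 1) 1 := by
        have hc : ContinuousWithinAt (fun _ : ℝ => 2 * q * (2 * q - 1)) (Ici 1) 1 :=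
          continuousWithinAt_const
        refine hc.congr ?_ ?_
        · intro x hx
          rcases eq_or_lt_of_le (mem_Ici.mp hx) with h1 | h1
          · simp [hT2, ← h1]
          · simp [hT2, not_le.mpr h1]
        · simp [hT2]
      have := hL.union hR
      rwa [Iic_union_Ici, continuousWithinAt_univ] at this
    · have hc : ContinuousAt (fun _ : ℝ => 2 * q * (2 * q - 1)) t := continuousAt_const
      apply hc.congr
      filter_upwards [Ioi_mem_nhds h] with x hx
      simp [hT2, not_le.mpr (mem_Ioi.mp hx)]
  -- DifferentiableOn facts
  have hdiff : DifferentiableOn ℝ T (Ioi 0) :=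
    fun t ht => ((hD1 t ht).differentiableAt).differentiableWithinAt
  have hdiff2 : DifferentiableOn ℝ (deriv T) (Ioi 0) :=
    fun t ht => ((hDD t ht).differentiableAt).differentiableWithinAt
  -- ContDiffOn
  have hcd : ContDiffOn ℝ 2 T (Ioi 0) := by
    rw [show (2 : WithTop ℕ∞) = 1 + 1 by norm_num,
      contDiffOn_succ_iff_deriv_of_isOpen isOpen_Ioi]
    refine ⟨hdiff, by simp, ?_⟩
    rw [show (1 : WithTop ℕ∞) = 0 + 1 by norm_num,
      contDiffOn_succ_iff_deriv_of_isOpen isOpen_Ioi]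
    refine ⟨hdiff2, by simp, ?_⟩
    rw [contDiffOn_zero]
    exact hT2cont.congr hd2
  refine ⟨hcd, ?_, ?_, ?_, ?_⟩
  · intro t ht
    rw [hd1 t ht]
    exact hT1pos t ht
  · -- convexity
    apply convexOn_of_deriv2_nonneg (convex_Ioi 0) (hcd.continuousOn) ?_ ?_ ?_
    · rwa [interior_Ioi]
    · rwa [interior_Ioi]
    · rw [interior_Ioi]
      intro t ht
      have : deriv^[2] T t = deriv (deriv T) t := by
        simp [Function.iterate_succ, Function.iterate_one]
      rw [this, hd2 t ht]
      exact hT2nonneg t ht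
  · -- the formula
    intro t ht
    rw [hd1 t ht, hd2 t ht]
    by_cases h : t ≤ 1
    · have hmul : t ^ (2 * q - 2) * t = t ^ (2 * q - 1) := by
        rw [show (2 * q - 1 : ℝ) = (2 * q - 2) + 1 by ring,
          Real.rpow_add ht, Real.rpow_one]
      simp only [hT1, hT2, if_pos h]
      rw [mul_assoc, hmul]
      ring
    · simp only [hT1, hT2, if_neg h]
      ring
  · -- the bounds
    intro t ht
    rw [hd1 t ht, hd2 t ht]
    by_cases h : t ≤ 1
    · have hp : (0:ℝ) < t ^ (2 * q - 1) := Real.rpow_pos_of_pos ht _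
      have hmul : t ^ (2 * q - 2) * t = t ^ (2 * q - 1) := by
        rw [show (2 * q - 1 : ℝ) = (2 * q - 2) + 1 by ring,
          Real.rpow_add ht, Real.rpow_one]
      simp only [hT1, hT2, if_pos h]
      rw [mul_assoc, hmul]
      constructor
      · nlinarith [mul_nonneg (show (0:ℝ) ≤ 4*q*(q-1) by nlinarith) hp.le]
      · have : 2 * q * (2 * q - 1) * t ^ (2 * q - 1) - 2 * q * t ^ (2 * q - 1)
            = 2 * (q - 1) * (2 * q * t ^ (2 * q - 1)) := by ring
        linarith
    · simp only [hT1, hT2, if_neg h]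
      push_neg at h
      constructor
      · nlinarith [mul_nonneg hq0.le (show (0:ℝ) ≤ q - 1 by linarith)]
      · nlinarith [mul_nonneg (show (0:ℝ) ≤ q - 1 by linarith)
          (mul_nonneg hA (show (0:ℝ) ≤ t - 1 by linarith))]
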